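/- Let λ:[0,1]→ℝ be continuous, γ:[0,1]→ℝ be continuous nondecreasing, and let K be a bounded subset of (0,∞)×[0,∞). Let 𝒵 = {0} ∪ Ψ⁻¹(K) ⊆ ℝ². Then the set of all solutions Z on [0,1] of the reflected equation dZ = AZ dλ − e₁ dγ + e₁ dK with Z(0) ∈ 𝒵 is precompact in the space C([0,1],ℝ²) with the supremum norm. -/

import Mathlib

open MeasureTheory Set Real Filter Topology ProbabilityTheory

noncomputable section

/-- `exp(δA)` applied to a vector `v ∈ ℝ²`, where `A = [[0,1],[1,0]]`. -/
def expA (d : ℝ) (v : ℝ × ℝ) : ℝ × ℝ :=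
  (Real.cosh d * v.1 + Real.sinh d * v.2, Real.sinh d * v.1 + Real.cosh d * v.2)

/-- `(Z, K)` is a solution of the reflected equation `dZ = A Z dλ - e₁ dγ + e₁ dK` on `I`:
`Z·e₁ ≥ 0` on `I`, the Stieltjes measure `dK` is carried by `{t ∈ I | Z t · e₁ = 0}`, and
for `s ≤ t` in `I`, `Z t = e^{A(λ_t-λ_s)} Z s + ∫_s^t e^{A(λ_t-λ_u)} e₁ (dK u - dγ u)`. -/
def IsSolutionPair (lam : ℝ → ℝ) (gam K : StieltjesFunction ℝ) (I : Set ℝ)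
    (Z : ℝ → ℝ × ℝ) : Prop :=
  (∀ t ∈ I, 0 ≤ (Z t).1) ∧
  K.measure {t ∈ I | (Z t).1 ≠ 0} = 0 ∧
  ∀ s ∈ I, ∀ t ∈ I, s ≤ t →
    Z t = expA (lam t - lam s) (Z s)
      + (∫ u in Set.Ioc s t, expA (lam t - lam u) (1, 0) ∂K.measure)
      - (∫ u in Set.Ioc s t, expA (lam t - lam u) (1, 0) ∂gam.measure)

/-- `Z` is a solution of the reflected equation on `I` (for some reflection term `K`). -/
def IsSolution (lam : ℝ → ℝ) (gam : StieltjesFunction ℝ) (I : Set ℝ)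
    (Z : ℝ → ℝ × ℝ) : Prop :=
  ∃ K : StieltjesFunction ℝ, IsSolutionPair lam gam K I Z

/-- The map `Ψ⁻¹(ℓ, δ) = (ℓ sinh δ, ℓ cosh δ)`. -/
def PsiInv (p : ℝ × ℝ) : ℝ × ℝ := (p.1 * Real.sinh p.2, p.1 * Real.cosh p.2)

section ReflAux

lemma refl_exp_abs_sub_one (d : ℝ) : |Real.exp d - 1| ≤ Real.exp |d| - 1 := by
  rcases abs_cases d with ⟨h1, _⟩ | ⟨h1, h2⟩
  · rw [h1]
    rw [abs_of_nonneg (by nlinarith [Real.add_one_le_exp d, Real.exp_pos d])]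
  · rw [h1, abs_of_nonpos (by nlinarith [Real.exp_lt_one_iff.mpr (show d < 0 from h2)]),
      Real.exp_neg]
    nlinarith [sq_nonneg (Real.exp d - 1), Real.exp_pos d,
      mul_inv_cancel₀ (ne_of_gt (Real.exp_pos d))]

lemma refl_cosh_le_exp_abs (d : ℝ) : Real.cosh d ≤ Real.exp |d| := by
  rw [← Real.cosh_abs, ← Real.cosh_add_sinh |d|]
  nlinarith [Real.sinh_nonneg_iff.2 (abs_nonneg d)]

lemma refl_exp_le_exp_abs (d : ℝ) : Real.exp d ≤ Real.exp |d| :=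
  Real.exp_le_exp.2 (le_abs_self d)

lemma refl_comp_bound (cd sd x y n : ℝ) (hc : 1 ≤ cd) (hx : |x| ≤ n) (hy : |y| ≤ n) :
    |cd * x + sd * y| ≤ (cd + |sd|) * n := by
  have h1 : |cd * x + sd * y| ≤ cd * |x| + |sd| * |y| := by
    calc |cd * x + sd * y| ≤ |cd * x| + |sd * y| := abs_add_le _ _
      _ = |cd| * |x| + |sd| * |y| := by rw [abs_mul, abs_mul]
      _ = cd * |x| + |sd| * |y| := by rw [abs_of_nonneg (by linarith)]
  nlinarith [abs_nonneg sd, abs_nonneg x, abs_nonneg y]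

lemma refl_norm_expA (d : ℝ) (v : ℝ × ℝ) : ‖expA d v‖ ≤ Real.exp |d| * ‖v‖ := by
  have h1 : |v.1| ≤ ‖v‖ := by rw [Prod.norm_def]; exact le_max_left _ _
  have h2 : |v.2| ≤ ‖v‖ := by rw [Prod.norm_def]; exact le_max_right _ _
  have hc : Real.cosh d + |Real.sinh d| = Real.exp |d| := by
    rw [Real.abs_sinh, ← Real.cosh_abs d, Real.cosh_add_sinh]
  rw [expA, Prod.norm_def]
  apply max_le
  · simpa only [Real.norm_eq_abs, hc] using
      refl_comp_bound (Real.cosh d) (Real.sinh d) v.1 v.2 ‖v‖ (Real.one_le_cosh d) h1 h2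
  · simp only [Real.norm_eq_abs]
    have h := refl_comp_bound (Real.cosh d) (Real.sinh d) v.2 v.1 ‖v‖ (Real.one_le_cosh d) h2 h1
    rw [hc] at h
    calc |Real.sinh d * v.1 + Real.cosh d * v.2|
        = |Real.cosh d * v.2 + Real.sinh d * v.1| := by ring_nf
      _ ≤ _ := h

lemma refl_norm_expA_sub (d : ℝ) (v : ℝ × ℝ) :
    ‖expA d v - v‖ ≤ (Real.exp |d| - 1) * ‖v‖ := by
  have h1 : |v.1| ≤ ‖v‖ := by rw [Prod.norm_def]; exact le_max_left _ _
  have h2 : |v.2| ≤ ‖v‖ := by rw [Prod.norm_def]; exact le_max_right _ _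
  have hc : Real.cosh d + |Real.sinh d| = Real.exp |d| := by
    rw [Real.abs_sinh, ← Real.cosh_abs d, Real.cosh_add_sinh]
  have hC := Real.one_le_cosh d
  have key : ∀ a b : ℝ, |a| ≤ ‖v‖ → |b| ≤ ‖v‖ →
      |(Real.cosh d - 1) * a + Real.sinh d * b| ≤ (Real.exp |d| - 1) * ‖v‖ := by
    intro a b ha hb
    have : |(Real.cosh d - 1) * a + Real.sinh d * b| ≤ (Real.cosh d - 1) * |a| + |Real.sinh d| * |b| := by
      calc _ ≤ |(Real.cosh d - 1) * a| + |Real.sinh d * b| := abs_add_le _ _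
        _ = (Real.cosh d - 1) * |a| + |Real.sinh d| * |b| := by
            rw [abs_mul, abs_mul, abs_of_nonneg (by linarith)]
    nlinarith [abs_nonneg (Real.sinh d), abs_nonneg a, abs_nonneg b, norm_nonneg v]
  rw [expA, Prod.norm_def]
  apply max_le
  · have := key v.1 v.2 h1 h2
    simp only [Real.norm_eq_abs, Prod.fst_sub]
    calc |Real.cosh d * v.1 + Real.sinh d * v.2 - v.1|
        = |(Real.cosh d - 1) * v.1 + Real.sinh d * v.2| := by ring_nf
      _ ≤ _ := this
  · have := key v.2 v.1 h2 h1
    simp only [Real.norm_eq_abs, Prod.snd_sub]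
    calc |Real.sinh d * v.1 + Real.cosh d * v.2 - v.2|
        = |(Real.cosh d - 1) * v.2 + Real.sinh d * v.1| := by ring_nf
      _ ≤ _ := this

lemma refl_norm_expA_e1 (d : ℝ) : ‖expA d ((1:ℝ),(0:ℝ))‖ ≤ Real.exp |d| := by
  have h := refl_norm_expA d (1,0)
  have h0 : ‖((1:ℝ),(0:ℝ))‖ = 1 := by rw [Prod.norm_def]; simp
  rw [h0, mul_one] at h; exact h

lemma refl_expA_q (d : ℝ) (v : ℝ × ℝ) :
    (expA d v).2 - (expA d v).1 = Real.exp (-d) * (v.2 - v.1) := by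
  simp only [expA]
  linear_combination (v.2 - v.1) * Real.cosh_sub_sinh d

lemma refl_expA_p (d : ℝ) (v : ℝ × ℝ) :
    (expA d v).1 + (expA d v).2 = Real.exp d * (v.1 + v.2) := by
  simp only [expA]
  linear_combination (v.1 + v.2) * Real.cosh_add_sinh d

lemma refl_Ioc_subset {s t : ℝ} (hs : s ∈ Set.Icc (0:ℝ) 1) (ht : t ∈ Set.Icc (0:ℝ) 1) :
    Set.Ioc s t ⊆ Set.Icc (0:ℝ) 1 := fun u hu => ⟨hs.1.trans hu.1.le, hu.2.trans ht.2⟩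

lemma refl_integrableOn {E : Type*} [NormedAddCommGroup E] (F : StieltjesFunction ℝ)
    {s t : ℝ} (hs : s ∈ Set.Icc (0:ℝ) 1) (ht : t ∈ Set.Icc (0:ℝ) 1) {g : ℝ → E}
    (hg : ContinuousOn g (Set.Icc 0 1)) : IntegrableOn g (Set.Ioc s t) F.measure :=
  (hg.integrableOn_compact isCompact_Icc).mono_set (refl_Ioc_subset hs ht)

lemma refl_measure_Ioc_lt_top (F : StieltjesFunction ℝ) (s t : ℝ) :
    F.measure (Set.Ioc s t) < ⊤ := by
  rw [F.measure_Ioc]; exact ENNReal.ofReal_lt_top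

lemma refl_measure_Ioc_toReal (F : StieltjesFunction ℝ) {s t : ℝ} (hst : s ≤ t) :
    (F.measure (Set.Ioc s t)).toReal = F t - F s := by
  rw [F.measure_Ioc, ENNReal.toReal_ofReal (sub_nonneg.2 (F.mono hst))]

lemma refl_setIntegral_le (F : StieltjesFunction ℝ) {s t C : ℝ} (hst : s ≤ t) {g : ℝ → ℝ}
    (hg : IntegrableOn g (Set.Ioc s t) F.measure) (hb : ∀ u ∈ Set.Ioc s t, g u ≤ C) :
    ∫ u in Set.Ioc s t, g u ∂F.measure ≤ C * (F t - F s) := by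
  have hcint : IntegrableOn (fun _ : ℝ => C) (Set.Ioc s t) F.measure :=
    integrableOn_const (refl_measure_Ioc_lt_top F s t).ne
  calc ∫ u in Set.Ioc s t, g u ∂F.measure ≤ ∫ _ in Set.Ioc s t, C ∂F.measure :=
        setIntegral_mono_on hg hcint measurableSet_Ioc hb
    _ = C * (F t - F s) := by
        rw [setIntegral_const, smul_eq_mul, measureReal_def, refl_measure_Ioc_toReal F hst, mul_comm]

lemma refl_setIntegral_ge (F : StieltjesFunction ℝ) {s t c : ℝ} (hst : s ≤ t) {g : ℝ → ℝ}
    (hg : IntegrableOn g (Set.Ioc s t) F.measure) (hb : ∀ u ∈ Set.Ioc s t, c ≤ g u) :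
    c * (F t - F s) ≤ ∫ u in Set.Ioc s t, g u ∂F.measure := by
  have hcint : IntegrableOn (fun _ : ℝ => c) (Set.Ioc s t) F.measure :=
    integrableOn_const (refl_measure_Ioc_lt_top F s t).ne
  calc c * (F t - F s) = ∫ _ in Set.Ioc s t, c ∂F.measure := by
        rw [setIntegral_const, smul_eq_mul, measureReal_def, refl_measure_Ioc_toReal F hst, mul_comm]
    _ ≤ _ := setIntegral_mono_on hcint hg measurableSet_Ioc hb

lemma refl_norm_setIntegral (F : StieltjesFunction ℝ) {s t C : ℝ} (hst : s ≤ t) {g : ℝ → ℝ × ℝ}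
    (hg : IntegrableOn g (Set.Ioc s t) F.measure)
    (hb : ∀ u ∈ Set.Ioc s t, ‖g u‖ ≤ C) :
    ‖∫ u in Set.Ioc s t, g u ∂F.measure‖ ≤ C * (F t - F s) := by
  have := norm_setIntegral_le_of_norm_le_const (refl_measure_Ioc_lt_top F s t) hb
    (f := g) (s := Set.Ioc s t)
  rwa [measureReal_def, refl_measure_Ioc_toReal F hst] at this

variable {lam : ℝ → ℝ} {gam K : StieltjesFunction ℝ} {Z : ℝ → ℝ × ℝ}

lemma refl_contOn_expA (hlam : ContinuousOn lam (Set.Icc 0 1)) (t : ℝ) :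
    ContinuousOn (fun u => expA (lam t - lam u) ((1:ℝ),(0:ℝ))) (Set.Icc 0 1) := by
  have h : ContinuousOn (fun u => lam t - lam u) (Set.Icc (0:ℝ) 1) :=
    continuousOn_const.sub hlam
  apply ContinuousOn.prodMk
  · simp only [expA, mul_one, mul_zero, add_zero]
    exact Real.continuous_cosh.comp_continuousOn h
  · simp only [expA, mul_one, mul_zero, add_zero]
    exact Real.continuous_sinh.comp_continuousOn h

lemma refl_contOn_exp_sub (hlam : ContinuousOn lam (Set.Icc 0 1)) (c : ℝ) (sgn : Bool) :
    ContinuousOn (fun u => Real.exp (if sgn then lam u - c else c - lam u)) (Set.Icc 0 1) := by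
  cases sgn <;> simp <;>
    exact Real.continuous_exp.comp_continuousOn (by fun_prop)

lemma refl_q_eq (hlam : ContinuousOn lam (Set.Icc 0 1))
    (hsol : IsSolutionPair lam gam K (Set.Icc 0 1) Z)
    {s t : ℝ} (hs : s ∈ Set.Icc (0:ℝ) 1) (ht : t ∈ Set.Icc (0:ℝ) 1) (hst : s ≤ t) :
    (Z t).2 - (Z t).1 = Real.exp (lam s - lam t) * ((Z s).2 - (Z s).1)
      - (∫ u in Set.Ioc s t, Real.exp (lam u - lam t) ∂K.measure)
      + ∫ u in Set.Ioc s t, Real.exp (lam u - lam t) ∂gam.measure := by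
  have E := hsol.2.2 s hs t ht hst
  set L : (ℝ × ℝ) →L[ℝ] ℝ :=
    ContinuousLinearMap.snd ℝ ℝ ℝ - ContinuousLinearMap.fst ℝ ℝ ℝ with hLdef
  have hLap : ∀ v : ℝ × ℝ, L v = v.2 - v.1 := fun v => rfl
  have hintK : IntegrableOn (fun u => expA (lam t - lam u) ((1:ℝ),(0:ℝ))) (Set.Ioc s t)
      K.measure := refl_integrableOn K hs ht (refl_contOn_expA hlam t)
  have hintG : IntegrableOn (fun u => expA (lam t - lam u) ((1:ℝ),(0:ℝ))) (Set.Ioc s t)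
      gam.measure := refl_integrableOn gam hs ht (refl_contOn_expA hlam t)
  have h1 : L (Z t) = L (expA (lam t - lam s) (Z s))
      + L (∫ u in Set.Ioc s t, expA (lam t - lam u) (1,0) ∂K.measure)
      - L (∫ u in Set.Ioc s t, expA (lam t - lam u) (1,0) ∂gam.measure) := by
    rw [E]; simp only [map_add, map_sub]
  have hptw : ∀ u : ℝ, L (expA (lam t - lam u) ((1:ℝ),(0:ℝ))) = -Real.exp (lam u - lam t) := by
    intro u
    rw [hLap, refl_expA_q]
    simp [neg_sub]
  have h2 : L (∫ u in Set.Ioc s t, expA (lam t - lam u) (1,0) ∂K.measure)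
      = - ∫ u in Set.Ioc s t, Real.exp (lam u - lam t) ∂K.measure := by
    rw [← L.integral_comp_comm hintK]
    simp only [hptw, integral_neg]
  have h3 : L (∫ u in Set.Ioc s t, expA (lam t - lam u) (1,0) ∂gam.measure)
      = - ∫ u in Set.Ioc s t, Real.exp (lam u - lam t) ∂gam.measure := by
    rw [← L.integral_comp_comm hintG]
    simp only [hptw, integral_neg]
  rw [h2, h3] at h1
  simp only [hLap, refl_expA_q, neg_sub] at h1
  linarith [h1]


lemma refl_p_eq (hlam : ContinuousOn lam (Set.Icc 0 1))
    (hsol : IsSolutionPair lam gam K (Set.Icc 0 1) Z)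
    {s t : ℝ} (hs : s ∈ Set.Icc (0:ℝ) 1) (ht : t ∈ Set.Icc (0:ℝ) 1) (hst : s ≤ t) :
    (Z t).1 + (Z t).2 = Real.exp (lam t - lam s) * ((Z s).1 + (Z s).2)
      + (∫ u in Set.Ioc s t, Real.exp (lam t - lam u) ∂K.measure)
      - ∫ u in Set.Ioc s t, Real.exp (lam t - lam u) ∂gam.measure := by
  have E := hsol.2.2 s hs t ht hst
  set L : (ℝ × ℝ) →L[ℝ] ℝ :=
    ContinuousLinearMap.fst ℝ ℝ ℝ + ContinuousLinearMap.snd ℝ ℝ ℝ with hLdef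
  have hLap : ∀ v : ℝ × ℝ, L v = v.1 + v.2 := fun v => rfl
  have hintK : IntegrableOn (fun u => expA (lam t - lam u) ((1:ℝ),(0:ℝ))) (Set.Ioc s t)
      K.measure := refl_integrableOn K hs ht (refl_contOn_expA hlam t)
  have hintG : IntegrableOn (fun u => expA (lam t - lam u) ((1:ℝ),(0:ℝ))) (Set.Ioc s t)
      gam.measure := refl_integrableOn gam hs ht (refl_contOn_expA hlam t)
  have h1 : L (Z t) = L (expA (lam t - lam s) (Z s))
      + L (∫ u in Set.Ioc s t, expA (lam t - lam u) (1,0) ∂K.measure)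
      - L (∫ u in Set.Ioc s t, expA (lam t - lam u) (1,0) ∂gam.measure) := by
    rw [E]; simp only [map_add, map_sub]
  have hptw : ∀ u : ℝ, L (expA (lam t - lam u) ((1:ℝ),(0:ℝ))) = Real.exp (lam t - lam u) := by
    intro u
    rw [hLap, refl_expA_p]
    simp
  have h2 : L (∫ u in Set.Ioc s t, expA (lam t - lam u) (1,0) ∂K.measure)
      = ∫ u in Set.Ioc s t, Real.exp (lam t - lam u) ∂K.measure := by
    rw [← L.integral_comp_comm hintK]
    simp only [hptw]
  have h3 : L (∫ u in Set.Ioc s t, expA (lam t - lam u) (1,0) ∂gam.measure)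
      = ∫ u in Set.Ioc s t, Real.exp (lam t - lam u) ∂gam.measure := by
    rw [← L.integral_comp_comm hintG]
    simp only [hptw]
  rw [h2, h3] at h1
  simp only [hLap, refl_expA_p] at h1
  linarith [h1]

lemma refl_Kflat (hsol : IsSolutionPair lam gam K (Set.Icc 0 1) Z)
    {a b : ℝ} (ha : a ∈ Set.Icc (0:ℝ) 1) (hb : b ∈ Set.Icc (0:ℝ) 1)
    (hx : ∀ u ∈ Set.Ioc a b, (Z u).1 ≠ 0) : K.measure (Set.Ioc a b) = 0 := by
  refine measure_mono_null (fun u hu => ?_) hsol.2.1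
  exact ⟨refl_Ioc_subset ha hb hu, hx u hu⟩

lemma refl_eq_flat (hsol : IsSolutionPair lam gam K (Set.Icc 0 1) Z)
    {a b : ℝ} (ha : a ∈ Set.Icc (0:ℝ) 1) (hb : b ∈ Set.Icc (0:ℝ) 1) (hab : a ≤ b)
    (h0 : K.measure (Set.Ioc a b) = 0) :
    Z b = expA (lam b - lam a) (Z a)
      - ∫ u in Set.Ioc a b, expA (lam b - lam u) (1,0) ∂gam.measure := by
  have E := hsol.2.2 a ha b hb hab
  rw [show K.measure.restrict (Set.Ioc a b) = 0 from Measure.restrict_eq_zero.2 h0] at E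
  simpa using E

lemma refl_exp_weight_le (M : ℝ) (hM : ∀ v ∈ Set.Icc (0:ℝ) 1, |lam v| ≤ M)
    {a b : ℝ} (ha : a ∈ Set.Icc (0:ℝ) 1) (hb : b ∈ Set.Icc (0:ℝ) 1) :
    Real.exp (lam a - lam b) ≤ Real.exp (2*M) := by
  have h1 := hM a ha; have h2 := hM b hb
  apply Real.exp_le_exp.2
  rw [abs_le] at h1 h2; linarith

lemma refl_norm_expA_le (M : ℝ) (hM : ∀ v ∈ Set.Icc (0:ℝ) 1, |lam v| ≤ M)
    {a b : ℝ} (ha : a ∈ Set.Icc (0:ℝ) 1) (hb : b ∈ Set.Icc (0:ℝ) 1) :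
    ‖expA (lam a - lam b) ((1:ℝ),(0:ℝ))‖ ≤ Real.exp (2*M) := by
  refine (refl_norm_expA_e1 _).trans (Real.exp_le_exp.2 ?_)
  have h1 := hM a ha; have h2 := hM b hb
  rw [abs_le] at h1 h2; rw [abs_le]; constructor <;> linarith

lemma refl_norm_IG (hlam : ContinuousOn lam (Set.Icc 0 1)) (M : ℝ)
    (hM : ∀ v ∈ Set.Icc (0:ℝ) 1, |lam v| ≤ M)
    {a b : ℝ} (ha : a ∈ Set.Icc (0:ℝ) 1) (hb : b ∈ Set.Icc (0:ℝ) 1) (hab : a ≤ b) :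
    ‖∫ u in Set.Ioc a b, expA (lam b - lam u) (1,0) ∂gam.measure‖
      ≤ Real.exp (2*M) * (gam b - gam a) := by
  refine refl_norm_setIntegral gam hab (refl_integrableOn gam ha hb (refl_contOn_expA hlam b))
    (fun u hu => refl_norm_expA_le M hM hb (refl_Ioc_subset ha hb hu))

lemma refl_norm_flat (hlam : ContinuousOn lam (Set.Icc 0 1)) (M : ℝ)
    (hM : ∀ v ∈ Set.Icc (0:ℝ) 1, |lam v| ≤ M)
    (hsol : IsSolutionPair lam gam K (Set.Icc 0 1) Z)
    {a b : ℝ} (ha : a ∈ Set.Icc (0:ℝ) 1) (hb : b ∈ Set.Icc (0:ℝ) 1) (hab : a ≤ b)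
    (h0 : K.measure (Set.Ioc a b) = 0) :
    ‖Z b‖ ≤ Real.exp (2*M) * ‖Z a‖ + Real.exp (2*M) * (gam b - gam a) := by
  rw [refl_eq_flat hsol ha hb hab h0]
  refine (norm_sub_le _ _).trans (add_le_add ?_ (refl_norm_IG hlam M hM ha hb hab))
  refine (refl_norm_expA _ _).trans ?_
  have : Real.exp |lam b - lam a| ≤ Real.exp (2*M) := by
    apply Real.exp_le_exp.2
    have h1 := hM a ha; have h2 := hM b hb
    rw [abs_le] at h1 h2; rw [abs_le]; constructor <;> linarith
  exact mul_le_mul_of_nonneg_right this (norm_nonneg _)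

lemma refl_norm_flat_sub (hlam : ContinuousOn lam (Set.Icc 0 1)) (M : ℝ)
    (hM : ∀ v ∈ Set.Icc (0:ℝ) 1, |lam v| ≤ M)
    (hsol : IsSolutionPair lam gam K (Set.Icc 0 1) Z)
    {a b e : ℝ} (ha : a ∈ Set.Icc (0:ℝ) 1) (hb : b ∈ Set.Icc (0:ℝ) 1) (hab : a ≤ b)
    (h0 : K.measure (Set.Ioc a b) = 0) (he : |lam b - lam a| ≤ e) :
    ‖Z b - Z a‖ ≤ (Real.exp e - 1) * ‖Z a‖ + Real.exp (2*M) * (gam b - gam a) := by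
  rw [refl_eq_flat hsol ha hb hab h0, sub_right_comm]
  refine (norm_sub_le _ _).trans (add_le_add ?_ (refl_norm_IG hlam M hM ha hb hab))
  refine (refl_norm_expA_sub _ _).trans ?_
  have : Real.exp |lam b - lam a| ≤ Real.exp e := Real.exp_le_exp.2 he
  exact mul_le_mul_of_nonneg_right (by linarith) (norm_nonneg _)

lemma refl_int_exp_sub_const (hlam : ContinuousOn lam (Set.Icc 0 1)) (F : StieltjesFunction ℝ)
    {s t : ℝ} (hs : s ∈ Set.Icc (0:ℝ) 1) (ht : t ∈ Set.Icc (0:ℝ) 1) (c : ℝ) :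
    IntegrableOn (fun u => Real.exp (lam u - c)) (Set.Ioc s t) F.measure :=
  refl_integrableOn F hs ht
    (Real.continuous_exp.comp_continuousOn (hlam.sub continuousOn_const))

lemma refl_int_const_sub_exp (hlam : ContinuousOn lam (Set.Icc 0 1)) (F : StieltjesFunction ℝ)
    {s t : ℝ} (hs : s ∈ Set.Icc (0:ℝ) 1) (ht : t ∈ Set.Icc (0:ℝ) 1) (c : ℝ) :
    IntegrableOn (fun u => Real.exp (c - lam u)) (Set.Ioc s t) F.measure :=
  refl_integrableOn F hs ht
    (Real.continuous_exp.comp_continuousOn (continuousOn_const.sub hlam))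

lemma refl_abs_le_two_norm (v : ℝ × ℝ) : |v.2 - v.1| ≤ 2 * ‖v‖ ∧ |v.1 + v.2| ≤ 2 * ‖v‖ := by
  have h1 : |v.1| ≤ ‖v‖ := by rw [Prod.norm_def]; exact le_max_left _ _
  have h2 : |v.2| ≤ ‖v‖ := by rw [Prod.norm_def]; exact le_max_right _ _
  constructor
  · calc |v.2 - v.1| ≤ |v.2| + |v.1| := abs_sub _ _
      _ ≤ 2 * ‖v‖ := by linarith
  · calc |v.1 + v.2| ≤ |v.1| + |v.2| := abs_add_le _ _
      _ ≤ 2 * ‖v‖ := by linarith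

lemma refl_q_ub (hlam : ContinuousOn lam (Set.Icc 0 1)) (M : ℝ)
    (hM : ∀ v ∈ Set.Icc (0:ℝ) 1, |lam v| ≤ M)
    (hsol : IsSolutionPair lam gam K (Set.Icc 0 1) Z)
    {r : ℝ} (hr : ‖Z 0‖ ≤ r) (hq0 : (Z 0).1 ≤ (Z 0).2) :
    ∀ t ∈ Set.Icc (0:ℝ) 1,
      (Z t).2 - (Z t).1 ≤ Real.exp (2*M) * (2*r + (gam 1 - gam 0)) := by
  intro t ht
  have h0 : (0:ℝ) ∈ Set.Icc (0:ℝ) 1 := ⟨le_refl 0, zero_le_one⟩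
  have hE := refl_q_eq hlam hsol h0 ht ht.1
  have hIK : 0 ≤ ∫ u in Set.Ioc 0 t, Real.exp (lam u - lam t) ∂K.measure := by
    have := refl_setIntegral_ge K ht.1 (refl_int_exp_sub_const hlam K h0 ht (lam t))
      (c := 0) (fun u _ => (Real.exp_pos _).le)
    simpa using this
  have hIG : ∫ u in Set.Ioc 0 t, Real.exp (lam u - lam t) ∂gam.measure
      ≤ Real.exp (2*M) * (gam t - gam 0) := by
    refine refl_setIntegral_le gam ht.1 (refl_int_exp_sub_const hlam gam h0 ht (lam t))
      (fun u hu => refl_exp_weight_le M hM (refl_Ioc_subset h0 ht hu) ht)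
  have hq0' : 0 ≤ (Z 0).2 - (Z 0).1 := by linarith
  have hq0'' : (Z 0).2 - (Z 0).1 ≤ 2*r := (abs_le.1 ((refl_abs_le_two_norm (Z 0)).1.trans
    (by linarith [norm_nonneg (Z 0)]))).2
  have hw : Real.exp (lam 0 - lam t) ≤ Real.exp (2*M) := refl_exp_weight_le M hM h0 ht
  have hgam : gam t - gam 0 ≤ gam 1 - gam 0 := by
    have := gam.mono ht.2; linarith
  have hC1 : (1:ℝ) ≤ Real.exp (2*M) := by
    rw [← Real.exp_zero]; apply Real.exp_le_exp.2
    have := hM 0 h0; have := abs_nonneg (lam 0); linarith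
  have hg0 : 0 ≤ gam t - gam 0 := by have := gam.mono ht.1; linarith
  nlinarith [Real.exp_pos (lam 0 - lam t), mul_le_mul_of_nonneg_right hw hq0']

lemma refl_p_lb (hlam : ContinuousOn lam (Set.Icc 0 1)) (M : ℝ)
    (hM : ∀ v ∈ Set.Icc (0:ℝ) 1, |lam v| ≤ M)
    (hsol : IsSolutionPair lam gam K (Set.Icc 0 1) Z)
    (hp0 : 0 ≤ (Z 0).1 + (Z 0).2) :
    ∀ t ∈ Set.Icc (0:ℝ) 1,
      -(Real.exp (2*M) * (gam 1 - gam 0)) ≤ (Z t).1 + (Z t).2 := by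
  intro t ht
  have h0 : (0:ℝ) ∈ Set.Icc (0:ℝ) 1 := ⟨le_refl 0, zero_le_one⟩
  have hE := refl_p_eq hlam hsol h0 ht ht.1
  have hIK : 0 ≤ ∫ u in Set.Ioc 0 t, Real.exp (lam t - lam u) ∂K.measure := by
    have := refl_setIntegral_ge K ht.1 (refl_int_const_sub_exp hlam K h0 ht (lam t))
      (c := 0) (fun u _ => (Real.exp_pos _).le)
    simpa using this
  have hIG : ∫ u in Set.Ioc 0 t, Real.exp (lam t - lam u) ∂gam.measure
      ≤ Real.exp (2*M) * (gam t - gam 0) := by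
    refine refl_setIntegral_le gam ht.1 (refl_int_const_sub_exp hlam gam h0 ht (lam t))
      (fun u hu => refl_exp_weight_le M hM ht (refl_Ioc_subset h0 ht hu))
  have hgam : gam t - gam 0 ≤ gam 1 - gam 0 := by
    have := gam.mono ht.2; linarith
  nlinarith [mul_nonneg (Real.exp_pos (lam t - lam 0)).le hp0,
    mul_le_mul_of_nonneg_left hgam (Real.exp_pos (2*M)).le]

lemma refl_zero_set_compact (hZc : ContinuousOn Z (Set.Icc 0 1))
    {a b : ℝ} (ha : a ∈ Set.Icc (0:ℝ) 1) (hb : b ∈ Set.Icc (0:ℝ) 1) :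
    IsCompact (Set.Icc a b ∩ (fun u => (Z u).1) ⁻¹' {0}) := by
  have hsub : Set.Icc a b ⊆ Set.Icc (0:ℝ) 1 := fun u hu => ⟨ha.1.trans hu.1, hu.2.trans hb.2⟩
  have hxc : ContinuousOn (fun u => (Z u).1) (Set.Icc a b) :=
    (continuous_fst.comp_continuousOn hZc).mono hsub
  exact (isCompact_Icc : IsCompact (Set.Icc a b)).of_isClosed_subset
    (hxc.preimage_isClosed_of_isClosed isClosed_Icc isClosed_singleton)
    Set.inter_subset_left

lemma refl_sup_bound (hlam : ContinuousOn lam (Set.Icc 0 1)) (M : ℝ)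
    (hM : ∀ v ∈ Set.Icc (0:ℝ) 1, |lam v| ≤ M)
    (hsol : IsSolutionPair lam gam K (Set.Icc 0 1) Z) (hZc : ContinuousOn Z (Set.Icc 0 1))
    {r : ℝ} (hr : ‖Z 0‖ ≤ r) (hq0 : (Z 0).1 ≤ (Z 0).2) (hp0 : 0 ≤ (Z 0).1 + (Z 0).2) :
    ∀ t ∈ Set.Icc (0:ℝ) 1, ‖Z t‖ ≤ Real.exp (2*M) *
      (r + Real.exp (2*M) * (2*r + (gam 1 - gam 0)) + (gam 1 - gam 0)) := by
  intro t ht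
  have h0 : (0:ℝ) ∈ Set.Icc (0:ℝ) 1 := ⟨le_refl 0, zero_le_one⟩
  set CM := Real.exp (2*M) with hCM
  set G := (gam 1 : ℝ) - gam 0 with hG
  have hC1 : (1:ℝ) ≤ CM := by
    rw [hCM, ← Real.exp_zero]; apply Real.exp_le_exp.2
    have := hM 0 h0; have := abs_nonneg (lam 0); linarith
  have hG0 : 0 ≤ G := by have := gam.mono (zero_le_one (α := ℝ)); rw [hG]; linarith
  have hr0 : 0 ≤ r := (norm_nonneg _).trans hr
  set Q := CM * (2*r + G) with hQ
  have hQ0 : 0 ≤ Q := by positivity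
  have hgam_le : ∀ a b : ℝ, a ∈ Set.Icc (0:ℝ) 1 → b ∈ Set.Icc (0:ℝ) 1 → a ≤ b →
      gam b - gam a ≤ G ∧ 0 ≤ gam b - gam a := by
    intro a b ha hb hab
    have h1 := gam.mono ha.1; have h2 := gam.mono hb.2; have h3 := gam.mono hab
    rw [hG]; constructor <;> linarith
  set S' := Set.Icc 0 t ∩ (fun u => (Z u).1) ⁻¹' {0} with hS'
  have hScomp : IsCompact S' := refl_zero_set_compact hZc h0 ht
  rcases eq_empty_or_nonempty S' with hSe | hSne
  · -- no zero in [0, t]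
    have hx : ∀ u ∈ Set.Ioc 0 t, (Z u).1 ≠ 0 := by
      intro u hu hx0
      have : u ∈ S' := ⟨⟨hu.1.le, hu.2⟩, hx0⟩
      rw [hSe] at this; exact this
    have := refl_norm_flat hlam M hM hsol h0 ht ht.1 (refl_Kflat hsol h0 ht hx)
    have hg := hgam_le 0 t h0 ht ht.1
    nlinarith
  · set σ := sSup S' with hσ
    have hσS : σ ∈ S' := hScomp.sSup_mem hSne
    have hσIcc : σ ∈ Set.Icc (0:ℝ) 1 := ⟨hσS.1.1, hσS.1.2.trans ht.2⟩
    have hσt : σ ≤ t := hσS.1.2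
    have hxσ : (Z σ).1 = 0 := hσS.2
    have hx : ∀ u ∈ Set.Ioc σ t, (Z u).1 ≠ 0 := by
      intro u hu hx0
      have hmem : u ∈ S' := ⟨⟨hσS.1.1.trans hu.1.le, hu.2⟩, hx0⟩
      have : u ≤ σ := le_csSup hScomp.bddAbove hmem
      exact absurd this (not_le.2 hu.1)
    have hb := refl_norm_flat hlam M hM hsol hσIcc ht hσt (refl_Kflat hsol hσIcc ht hx)
    have hyub := refl_q_ub hlam M hM hsol hr hq0 σ hσIcc
    have hylb := refl_p_lb hlam M hM hsol hp0 σ hσIcc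
    rw [hxσ] at hyub hylb
    have hZσ : ‖Z σ‖ ≤ Q := by
      have : ‖Z σ‖ = max |(Z σ).1| |(Z σ).2| := by
        rw [Prod.norm_def]; simp [Real.norm_eq_abs]
      rw [this, hxσ]
      simp only [abs_zero]
      apply max_le hQ0
      rw [abs_le]
      constructor
      · have : -(CM * G) ≤ 0 + (Z σ).2 := by simpa using hylb
        have hQG : CM * G ≤ Q := by rw [hQ]; nlinarith
        linarith
      · have : (Z σ).2 - 0 ≤ Q := by simpa [hQ, hG] using hyub
        linarith
    have hg := hgam_le σ t hσIcc ht hσt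
    nlinarith [mul_le_mul_of_nonneg_left hZσ (by positivity : (0:ℝ) ≤ CM)]

lemma refl_exp_weight_ge (M : ℝ) (hM : ∀ v ∈ Set.Icc (0:ℝ) 1, |lam v| ≤ M)
    {a b : ℝ} (ha : a ∈ Set.Icc (0:ℝ) 1) (hb : b ∈ Set.Icc (0:ℝ) 1) :
    Real.exp (-(2*M)) ≤ Real.exp (lam a - lam b) := by
  have h1 := hM a ha; have h2 := hM b hb
  apply Real.exp_le_exp.2
  rw [abs_le] at h1 h2; linarith

lemma refl_no_atom (hlam : ContinuousOn lam (Set.Icc 0 1)) (M : ℝ)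
    (hM : ∀ v ∈ Set.Icc (0:ℝ) 1, |lam v| ≤ M) (hgamc : Continuous gam)
    (hsol : IsSolutionPair lam gam K (Set.Icc 0 1) Z) (hZc : ContinuousOn Z (Set.Icc 0 1))
    (R : ℝ) (hRb : ∀ v ∈ Set.Icc (0:ℝ) 1, ‖Z v‖ ≤ R)
    {u : ℝ} (hu : u ∈ Set.Icc (0:ℝ) 1) (hu0 : 0 < u) : K.measure {u} = 0 := by
  set CM := Real.exp (2*M) with hCM
  have hCM0 : (0:ℝ) < CM := Real.exp_pos _
  have hfin : K.measure {u} ≠ ⊤ := by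
    refine ne_top_of_le_ne_top (refl_measure_Ioc_lt_top K (u-1) u).ne
      (measure_mono (fun v hv => ?_))
    rw [Set.mem_singleton_iff] at hv
    exact ⟨by rw [hv]; linarith, by rw [hv]⟩
  set A := (K.measure {u}).toReal with hA
  have hA0 : 0 ≤ A := ENNReal.toReal_nonneg
  set f : ℝ → ℝ := fun s => CM * (2*‖Z u - Z s‖
      + (Real.exp |lam u - lam s| - 1)*(2*R) + CM*(gam u - gam s)) with hf
  -- pointwise bound
  have hptw : ∀ s ∈ Set.Ico (0:ℝ) u, A ≤ f s := by
    intro s hs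
    have hsIcc : s ∈ Set.Icc (0:ℝ) 1 := ⟨hs.1, hs.2.le.trans hu.2⟩
    have hsu : s ≤ u := hs.2.le
    have hE := refl_p_eq hlam hsol hsIcc hu hsu
    have hIK : Real.exp (-(2*M)) * (K u - K s)
        ≤ ∫ v in Set.Ioc s u, Real.exp (lam u - lam v) ∂K.measure :=
      refl_setIntegral_ge K hsu (refl_int_const_sub_exp hlam K hsIcc hu (lam u))
        (fun v hv => refl_exp_weight_ge M hM hu (refl_Ioc_subset hsIcc hu hv))
    have hIG : ∫ v in Set.Ioc s u, Real.exp (lam u - lam v) ∂gam.measure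
        ≤ CM * (gam u - gam s) :=
      refl_setIntegral_le gam hsu (refl_int_const_sub_exp hlam gam hsIcc hu (lam u))
        (fun v hv => refl_exp_weight_le M hM hu (refl_Ioc_subset hsIcc hu hv))
    have hAle : A ≤ K u - K s := by
      have hsub : {u} ⊆ Set.Ioc s u := fun v hv => by
        rw [Set.mem_singleton_iff] at hv; exact ⟨by rw [hv]; exact hs.2, by rw [hv]⟩
      have := ENNReal.toReal_mono (refl_measure_Ioc_lt_top K s u).ne (measure_mono hsub)
      rwa [refl_measure_Ioc_toReal K hsu] at this
    -- p increment abs bounds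
    have hpd : |((Z u).1 + (Z u).2) - ((Z s).1 + (Z s).2)| ≤ 2*‖Z u - Z s‖ := by
      have := (refl_abs_le_two_norm (Z u - Z s)).2
      simpa [Prod.fst_sub, Prod.snd_sub, sub_add_sub_comm] using this
    have hps : |(Z s).1 + (Z s).2| ≤ 2*R := by
      have := (refl_abs_le_two_norm (Z s)).2
      have hR := hRb s hsIcc
      nlinarith
    have hexp1 : |Real.exp (lam u - lam s) - 1| ≤ Real.exp |lam u - lam s| - 1 :=
      refl_exp_abs_sub_one _
    -- combine
    have key : Real.exp (-(2*M)) * A ≤ 2*‖Z u - Z s‖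
        + (Real.exp |lam u - lam s| - 1)*(2*R) + CM*(gam u - gam s) := by
      have hKmono : 0 ≤ K u - K s := sub_nonneg.2 (K.mono hsu)
      have h1 : Real.exp (-(2*M)) * A ≤ Real.exp (-(2*M)) * (K u - K s) :=
        mul_le_mul_of_nonneg_left hAle (Real.exp_pos _).le
      have h2 : ((Z u).1 + (Z u).2) - Real.exp (lam u - lam s) * ((Z s).1 + (Z s).2)
          = (((Z u).1 + (Z u).2) - ((Z s).1 + (Z s).2))
            - (Real.exp (lam u - lam s) - 1) * ((Z s).1 + (Z s).2) := by ring
      have habs : ∀ x y : ℝ, x ≤ |x| := fun x y => le_abs_self x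
      have h3 : ((Z u).1 + (Z u).2) - Real.exp (lam u - lam s) * ((Z s).1 + (Z s).2)
          ≤ 2*‖Z u - Z s‖ + (Real.exp |lam u - lam s| - 1)*(2*R) := by
        rw [h2]
        have e1 : (((Z u).1 + (Z u).2) - ((Z s).1 + (Z s).2)) ≤ 2*‖Z u - Z s‖ :=
          (le_abs_self _).trans hpd
        have e2 : -((Real.exp (lam u - lam s) - 1) * ((Z s).1 + (Z s).2))
            ≤ (Real.exp |lam u - lam s| - 1)*(2*R) := by
          have : |(Real.exp (lam u - lam s) - 1) * ((Z s).1 + (Z s).2)|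
              ≤ (Real.exp |lam u - lam s| - 1)*(2*R) := by
            rw [abs_mul]
            have hnn : (0:ℝ) ≤ |Real.exp (lam u - lam s) - 1| := abs_nonneg _
            have hnn2 : (0:ℝ) ≤ Real.exp |lam u - lam s| - 1 := by
              nlinarith [Real.one_le_exp (abs_nonneg (lam u - lam s))]
            exact mul_le_mul hexp1 hps (abs_nonneg _) hnn2
          linarith [neg_abs_le ((Real.exp (lam u - lam s) - 1) * ((Z s).1 + (Z s).2)), this]
        linarith
      linarith [hIK.trans (by linarith [hE, hIG] :
        (∫ v in Set.Ioc s u, Real.exp (lam u - lam v) ∂K.measure)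
          ≤ ((Z u).1 + (Z u).2) - Real.exp (lam u - lam s) * ((Z s).1 + (Z s).2)
            + CM*(gam u - gam s))]
    -- multiply by CM
    have hinv : CM * Real.exp (-(2*M)) = 1 := by
      rw [hCM, ← Real.exp_add]; norm_num
    calc A = CM * (Real.exp (-(2*M)) * A) := by
          rw [← mul_assoc, hinv, one_mul]
      _ ≤ f s := by
          rw [hf]
          exact mul_le_mul_of_nonneg_left key hCM0.le
  -- limit
  have hNB : (𝓝[Set.Ico (0:ℝ) u] u).NeBot := by
    rw [← mem_closure_iff_nhdsWithin_neBot, closure_Ico hu0.ne]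
    exact ⟨hu0.le, le_rfl⟩
  have hsub : Set.Ico (0:ℝ) u ⊆ Set.Icc (0:ℝ) 1 :=
    fun v hv => ⟨hv.1, hv.2.le.trans hu.2⟩
  have hZt : Filter.Tendsto Z (𝓝[Set.Ico (0:ℝ) u] u) (𝓝 (Z u)) :=
    (hZc u hu).mono_left (nhdsWithin_mono u hsub)
  have hlamt : Filter.Tendsto lam (𝓝[Set.Ico (0:ℝ) u] u) (𝓝 (lam u)) :=
    (hlam u hu).mono_left (nhdsWithin_mono u hsub)
  have hgamt : Filter.Tendsto (fun s => (gam s : ℝ)) (𝓝[Set.Ico (0:ℝ) u] u) (𝓝 (gam u)) :=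
    (hgamc.tendsto u).mono_left nhdsWithin_le_nhds
  have T1 : Filter.Tendsto (fun s => ‖Z u - Z s‖) (𝓝[Set.Ico (0:ℝ) u] u) (𝓝 0) := by
    have := (tendsto_const_nhds (x := Z u)).sub hZt
    simpa using this.norm
  have T2 : Filter.Tendsto (fun s => Real.exp |lam u - lam s| - 1)
      (𝓝[Set.Ico (0:ℝ) u] u) (𝓝 0) := by
    have h := ((tendsto_const_nhds (x := lam u)).sub hlamt).abs
    have h2 := (Real.continuous_exp.tendsto _).comp h
    simpa using h2.sub (tendsto_const_nhds (x := (1:ℝ)))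
  have T3 : Filter.Tendsto (fun s => (gam u : ℝ) - gam s) (𝓝[Set.Ico (0:ℝ) u] u) (𝓝 0) := by
    have := (tendsto_const_nhds (x := (gam u : ℝ))).sub hgamt
    simpa using this
  have Tf : Filter.Tendsto f (𝓝[Set.Ico (0:ℝ) u] u) (𝓝 0) := by
    have := (((T1.const_mul 2).add (T2.mul_const (2*R))).add (T3.const_mul CM)).const_mul CM
    simpa using this
  have hev : ∀ᶠ s in 𝓝[Set.Ico (0:ℝ) u] u, A ≤ f s :=
    Filter.eventually_of_mem self_mem_nhdsWithin hptw
  have hA_le : A ≤ 0 := ge_of_tendsto Tf hev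
  have : A = 0 := le_antisymm hA_le hA0
  rcases (ENNReal.toReal_eq_zero_iff _).1 this with h | h
  · exact h
  · exact absurd h hfin

lemma refl_exp_sub_one_le {d e : ℝ} (h : |d| ≤ e) : |Real.exp d - 1| ≤ Real.exp e - 1 := by
  refine (refl_exp_abs_sub_one d).trans ?_
  have := Real.exp_le_exp.2 h; linarith

lemma refl_zero_inc (hlam : ContinuousOn lam (Set.Icc 0 1)) (M : ℝ)
    (hM : ∀ v ∈ Set.Icc (0:ℝ) 1, |lam v| ≤ M)
    (hsol : IsSolutionPair lam gam K (Set.Icc 0 1) Z)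
    (R : ℝ) (hRb : ∀ v ∈ Set.Icc (0:ℝ) 1, ‖Z v‖ ≤ R)
    {a b e : ℝ} (ha : a ∈ Set.Icc (0:ℝ) 1) (hb : b ∈ Set.Icc (0:ℝ) 1) (hab : a ≤ b)
    (hxa : (Z a).1 = 0) (hxb : (Z b).1 = 0) (he : |lam b - lam a| ≤ e) :
    ‖Z b - Z a‖ ≤ (Real.exp e - 1) * (2*R) + Real.exp (2*M) * (gam b - gam a) := by
  set CM := Real.exp (2*M) with hCM
  have hqE := refl_q_eq hlam hsol ha hb hab
  have hpE := refl_p_eq hlam hsol ha hb hab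
  have hIKq : 0 ≤ ∫ u in Set.Ioc a b, Real.exp (lam u - lam b) ∂K.measure := by
    have := refl_setIntegral_ge K hab (refl_int_exp_sub_const hlam K ha hb (lam b))
      (c := 0) (fun u _ => (Real.exp_pos _).le)
    simpa using this
  have hIKp : 0 ≤ ∫ u in Set.Ioc a b, Real.exp (lam b - lam u) ∂K.measure := by
    have := refl_setIntegral_ge K hab (refl_int_const_sub_exp hlam K ha hb (lam b))
      (c := 0) (fun u _ => (Real.exp_pos _).le)
    simpa using this
  have hIGq : ∫ u in Set.Ioc a b, Real.exp (lam u - lam b) ∂gam.measure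
      ≤ CM * (gam b - gam a) :=
    refl_setIntegral_le gam hab (refl_int_exp_sub_const hlam gam ha hb (lam b))
      (fun u hu => refl_exp_weight_le M hM (refl_Ioc_subset ha hb hu) hb)
  have hIGp0 : 0 ≤ ∫ u in Set.Ioc a b, Real.exp (lam b - lam u) ∂gam.measure := by
    have := refl_setIntegral_ge gam hab (refl_int_const_sub_exp hlam gam ha hb (lam b))
      (c := 0) (fun u _ => (Real.exp_pos _).le)
    simpa using this
  have hIGp : ∫ u in Set.Ioc a b, Real.exp (lam b - lam u) ∂gam.measure
      ≤ CM * (gam b - gam a) :=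
    refl_setIntegral_le gam hab (refl_int_const_sub_exp hlam gam ha hb (lam b))
      (fun u hu => refl_exp_weight_le M hM hb (refl_Ioc_subset ha hb hu))
  have hqa : |(Z a).2 - (Z a).1| ≤ 2*R := by
    have := (refl_abs_le_two_norm (Z a)).1
    have hR := hRb a ha; nlinarith
  have he1 : |Real.exp (lam a - lam b) - 1| ≤ Real.exp e - 1 :=
    refl_exp_sub_one_le (by rwa [abs_sub_comm])
  have he2 : |Real.exp (lam b - lam a) - 1| ≤ Real.exp e - 1 := refl_exp_sub_one_le he
  -- y b - y a from q equation (upper) and p equation (lower)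
  have hyq : (Z b).2 - (Z a).2 ≤ (Real.exp e - 1) * (2*R) + CM * (gam b - gam a) := by
    have h1 : (Z b).2 - (Z a).2 = ((Z b).2 - (Z b).1) - ((Z a).2 - (Z a).1) := by
      rw [hxa, hxb]; ring
    rw [h1, hqE]
    have h2 : (Real.exp (lam a - lam b) - 1) * ((Z a).2 - (Z a).1)
        ≤ (Real.exp e - 1) * (2*R) := by
      calc _ ≤ |(Real.exp (lam a - lam b) - 1) * ((Z a).2 - (Z a).1)| := le_abs_self _
        _ = |Real.exp (lam a - lam b) - 1| * |(Z a).2 - (Z a).1| := abs_mul _ _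
        _ ≤ (Real.exp e - 1) * (2*R) := by
            have hnn : (0:ℝ) ≤ Real.exp e - 1 := by
              have h3 : (0:ℝ) ≤ |lam b - lam a| := abs_nonneg _
              have := Real.one_le_exp (h3.trans he); linarith
            exact mul_le_mul he1 hqa (abs_nonneg _) hnn
    linarith
  have hyp : -((Real.exp e - 1) * (2*R) + CM * (gam b - gam a)) ≤ (Z b).2 - (Z a).2 := by
    have h1 : (Z b).2 - (Z a).2 = ((Z b).1 + (Z b).2) - ((Z a).1 + (Z a).2) := by
      rw [hxa, hxb]; ring
    rw [h1, hpE]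
    have hpa : |(Z a).1 + (Z a).2| ≤ 2*R := by
      have := (refl_abs_le_two_norm (Z a)).2
      have hR := hRb a ha; nlinarith
    have h2 : -((Real.exp e - 1) * (2*R))
        ≤ (Real.exp (lam b - lam a) - 1) * ((Z a).1 + (Z a).2) := by
      have : |(Real.exp (lam b - lam a) - 1) * ((Z a).1 + (Z a).2)|
          ≤ (Real.exp e - 1) * (2*R) := by
        rw [abs_mul]
        have hnn : (0:ℝ) ≤ Real.exp e - 1 := by
          have h3 : (0:ℝ) ≤ |lam b - lam a| := abs_nonneg _
          have := Real.one_le_exp (h3.trans he); linarith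
        exact mul_le_mul he2 hpa (abs_nonneg _) hnn
      linarith [neg_abs_le ((Real.exp (lam b - lam a) - 1) * ((Z a).1 + (Z a).2))]
    linarith
  have hnorm : ‖Z b - Z a‖ = |(Z b).2 - (Z a).2| := by
    rw [Prod.norm_def, Prod.fst_sub, Prod.snd_sub, hxa, hxb]
    simp [Real.norm_eq_abs]
  rw [hnorm, abs_le]
  exact ⟨by linarith, by linarith⟩

lemma refl_increment (hlam : ContinuousOn lam (Set.Icc 0 1)) (M : ℝ)
    (hM : ∀ v ∈ Set.Icc (0:ℝ) 1, |lam v| ≤ M) (hgamc : Continuous gam)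
    (hsol : IsSolutionPair lam gam K (Set.Icc 0 1) Z) (hZc : ContinuousOn Z (Set.Icc 0 1))
    (R : ℝ) (hRb : ∀ v ∈ Set.Icc (0:ℝ) 1, ‖Z v‖ ≤ R)
    {s t e : ℝ} (hs : s ∈ Set.Icc (0:ℝ) 1) (ht : t ∈ Set.Icc (0:ℝ) 1) (hst : s ≤ t)
    (hosc : ∀ a ∈ Set.Icc s t, ∀ b ∈ Set.Icc s t, |lam a - lam b| ≤ e)
    (hgs : gam t - gam s ≤ e) :
    ‖Z t - Z s‖ ≤ 4*R*(Real.exp e - 1) + 5*Real.exp (2*M)*e := by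
  set CM := Real.exp (2*M) with hCM
  have hCM0 : (0:ℝ) < CM := Real.exp_pos _
  have hR0 : 0 ≤ R := (norm_nonneg (Z s)).trans (hRb s hs)
  have he0 : 0 ≤ e := (abs_nonneg (lam s - lam s)).trans (hosc s ⟨le_rfl, hst⟩ s ⟨le_rfl, hst⟩)
  have hex0 : 0 ≤ Real.exp e - 1 := by have := Real.one_le_exp he0; linarith
  have hmemIcc : ∀ u ∈ Set.Icc s t, u ∈ Set.Icc (0:ℝ) 1 :=
    fun u hu => ⟨hs.1.trans hu.1, hu.2.trans ht.2⟩
  have hgmono : ∀ a b : ℝ, a ∈ Set.Icc s t → b ∈ Set.Icc s t → a ≤ b →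
      gam b - gam a ≤ e ∧ 0 ≤ gam b - gam a := by
    intro a b ha hb hab
    have h1 := gam.mono ha.1; have h2 := gam.mono hb.2; have h3 := gam.mono hab
    constructor <;> linarith
  set S' := Set.Icc s t ∩ (fun u => (Z u).1) ⁻¹' {0} with hS'
  have hScomp : IsCompact S' := refl_zero_set_compact hZc hs ht
  rcases eq_empty_or_nonempty S' with hSe | hSne
  · have hx : ∀ u ∈ Set.Ioc s t, (Z u).1 ≠ 0 := by
      intro u hu hx0
      have : u ∈ S' := ⟨⟨hu.1.le, hu.2⟩, hx0⟩
      rw [hSe] at this; exact this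
    have hb := refl_norm_flat_sub hlam M hM hsol hs ht hst (refl_Kflat hsol hs ht hx)
      (hosc t ⟨hst, le_rfl⟩ s ⟨le_rfl, hst⟩)
    have hZs := hRb s hs
    nlinarith
  · set τ := sInf S' with hτ
    set σ := sSup S' with hσ
    have hτS : τ ∈ S' := hScomp.sInf_mem hSne
    have hσS : σ ∈ S' := hScomp.sSup_mem hSne
    have hτσ : τ ≤ σ := csInf_le_csSup hSne hScomp.bddBelow hScomp.bddAbove
    have hτI : τ ∈ Set.Icc (0:ℝ) 1 := hmemIcc τ hτS.1
    have hσI : σ ∈ Set.Icc (0:ℝ) 1 := hmemIcc σ hσS.1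
    have hxτ : (Z τ).1 = 0 := hτS.2
    have hxσ : (Z σ).1 = 0 := hσS.2
    -- piece 1 : s to τ
    have hK1 : K.measure (Set.Ioc s τ) = 0 := by
      rcases eq_or_lt_of_le hτS.1.1 with heq | hlt
      · rw [← heq, Set.Ioc_self]; exact measure_empty
      · have hIoo : K.measure (Set.Ioo s τ) = 0 := by
          refine measure_mono_null (fun u hu => ?_) hsol.2.1
          have huI : u ∈ Set.Icc s t := ⟨hu.1.le, hu.2.le.trans (hτσ.trans hσS.1.2)⟩
          refine ⟨hmemIcc u huI, fun hx0 => ?_⟩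
          have : τ ≤ u := csInf_le hScomp.bddBelow ⟨huI, hx0⟩
          exact absurd this (not_le.2 hu.2)
        have hatom : K.measure {τ} = 0 :=
          refl_no_atom hlam M hM hgamc hsol hZc R hRb hτI (hs.1.trans_lt hlt)
        refine le_antisymm ?_ zero_le
        calc K.measure (Set.Ioc s τ) ≤ K.measure (Set.Ioo s τ ∪ {τ}) := by
              refine measure_mono (fun u hu => ?_)
              rcases eq_or_lt_of_le hu.2 with h | h
              · exact Or.inr (by simp [h])
              · exact Or.inl ⟨hu.1, h⟩
          _ ≤ K.measure (Set.Ioo s τ) + K.measure {τ} := measure_union_le _ _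
          _ = 0 := by rw [hIoo, hatom, add_zero]
    have hp1 := refl_norm_flat_sub hlam M hM hsol hs hτI hτS.1.1 hK1
      (hosc τ hτS.1 s ⟨le_rfl, hst⟩)
    -- piece 2 : τ to σ
    have hp2 := refl_zero_inc hlam M hM hsol R hRb hτI hσI hτσ hxτ hxσ
      (hosc σ hσS.1 τ hτS.1)
    -- piece 3 : σ to t
    have hx3 : ∀ u ∈ Set.Ioc σ t, (Z u).1 ≠ 0 := by
      intro u hu hx0
      have huI : u ∈ Set.Icc s t := ⟨hτS.1.1.trans (hτσ.trans hu.1.le), hu.2⟩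
      have : u ≤ σ := le_csSup hScomp.bddAbove ⟨huI, hx0⟩
      exact absurd this (not_le.2 hu.1)
    have hp3 := refl_norm_flat_sub hlam M hM hsol hσI ht hσS.1.2 (refl_Kflat hsol hσI ht hx3)
      (hosc t ⟨hst, le_rfl⟩ σ hσS.1)
    -- assemble
    have htri : ‖Z t - Z s‖ ≤ ‖Z t - Z σ‖ + ‖Z σ - Z τ‖ + ‖Z τ - Z s‖ := by
      calc ‖Z t - Z s‖ = ‖(Z t - Z σ) + ((Z σ - Z τ) + (Z τ - Z s))‖ := by ring_nf
        _ ≤ ‖Z t - Z σ‖ + ‖(Z σ - Z τ) + (Z τ - Z s)‖ := norm_add_le _ _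
        _ ≤ ‖Z t - Z σ‖ + (‖Z σ - Z τ‖ + ‖Z τ - Z s‖) := by
            linarith [norm_add_le (Z σ - Z τ) (Z τ - Z s)]
        _ = _ := by ring
    have hg1 := hgmono s τ ⟨le_rfl, hst⟩ hτS.1 hτS.1.1
    have hg2 := hgmono τ σ hτS.1 hσS.1 hτσ
    have hg3 := hgmono σ t hσS.1 ⟨hst, le_rfl⟩ hσS.1.2
    have hZs := hRb s hs
    have hZσ := hRb σ hσI
    have hns : ‖Z s‖ ≤ R := hZs
    have hnσ : ‖Z σ‖ ≤ R := hZσ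
    have e1 : ‖Z τ - Z s‖ ≤ (Real.exp e - 1) * R + CM * e := by
      refine hp1.trans ?_
      have := mul_le_mul_of_nonneg_left hg1.1 hCM0.le
      nlinarith [norm_nonneg (Z s)]
    have e2 : ‖Z σ - Z τ‖ ≤ (Real.exp e - 1) * (2*R) + CM * e := by
      refine hp2.trans ?_
      have := mul_le_mul_of_nonneg_left hg2.1 hCM0.le
      linarith
    have e3 : ‖Z t - Z σ‖ ≤ (Real.exp e - 1) * R + CM * e := by
      refine hp3.trans ?_
      have := mul_le_mul_of_nonneg_left hg3.1 hCM0.le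
      nlinarith [norm_nonneg (Z σ)]
    nlinarith

end ReflAux

/-- **Lemma 3 (5).** For `𝒵 = {0} ∪ Ψ⁻¹(K)` with `K` a bounded subset of `(0,∞) × [0,∞)`,
the set of solutions of the reflected equation on `[0,1]` starting in `𝒵` is precompact
in `C([0,1], ℝ²)`. -/
theorem solutions_precompact (lam : ℝ → ℝ) (hlam : ContinuousOn lam (Set.Icc 0 1))
    (gam : StieltjesFunction ℝ) (hgam : Continuous gam)
    (Kset : Set (ℝ × ℝ)) (hKb : Bornology.IsBounded Kset)
    (hKsub : Kset ⊆ Set.Ioi (0:ℝ) ×ˢ Set.Ici (0:ℝ)) :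
    IsCompact (closure {f : C(Set.Icc (0:ℝ) 1, ℝ × ℝ) | ∃ Z : ℝ → ℝ × ℝ,
      IsSolution lam gam (Set.Icc 0 1) Z ∧
      Z 0 ∈ insert (0 : ℝ × ℝ) (PsiInv '' Kset) ∧
      ∀ u : Set.Icc (0:ℝ) 1, f u = Z u}) := by
  -- bound on lam
  obtain ⟨M, hM'⟩ := (isCompact_Icc (a := (0:ℝ)) (b := 1)).exists_bound_of_continuousOn hlam
  have hM : ∀ v ∈ Set.Icc (0:ℝ) 1, |lam v| ≤ M := fun v hv => hM' v hv
  -- bound on initial conditions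
  obtain ⟨r₀, hr₀⟩ := hKb.subset_closedBall 0
  have hPc : Continuous PsiInv := by
    unfold PsiInv
    exact (continuous_fst.mul (Real.continuous_sinh.comp continuous_snd)).prodMk
      (continuous_fst.mul (Real.continuous_cosh.comp continuous_snd))
  obtain ⟨r₁, hr₁⟩ := ((isCompact_closedBall (0:ℝ×ℝ) r₀).image hPc).isBounded.subset_closedBall 0
  set r := max r₁ 0 with hrdef
  have hr0 : (0:ℝ) ≤ r := le_max_right _ _
  have hr𝒵 : ∀ z ∈ insert (0:ℝ×ℝ) (PsiInv '' Kset), ‖z‖ ≤ r := by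
    intro z hz
    rcases hz with rfl | ⟨w, hw, rfl⟩
    · simpa using hr0
    · have : PsiInv w ∈ Metric.closedBall (0:ℝ×ℝ) r₁ :=
        hr₁ ⟨w, hr₀ hw, rfl⟩
      rw [Metric.mem_closedBall, dist_zero_right] at this
      exact this.trans (le_max_left _ _)
  have hcone : ∀ z ∈ insert (0:ℝ×ℝ) (PsiInv '' Kset), z.1 ≤ z.2 ∧ 0 ≤ z.1 + z.2 := by
    intro z hz
    rcases hz with rfl | ⟨w, hw, rfl⟩
    · simp
    · have hw1 : 0 < w.1 := (hKsub hw).1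
      have hw2 : 0 ≤ w.2 := (hKsub hw).2
      have hsc : Real.sinh w.2 ≤ Real.cosh w.2 := by
        have := Real.cosh_sub_sinh w.2; nlinarith [Real.exp_pos (-w.2)]
      have hsinh : 0 ≤ Real.sinh w.2 := Real.sinh_nonneg_iff.2 hw2
      have hcosh : 0 < Real.cosh w.2 := Real.cosh_pos w.2
      have h1 : (PsiInv w).1 = w.1 * Real.sinh w.2 := rfl
      have h2 : (PsiInv w).2 = w.1 * Real.cosh w.2 := rfl
      constructor
      · rw [h1, h2]; exact mul_le_mul_of_nonneg_left hsc hw1.le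
      · rw [h1, h2]; nlinarith
  -- global constants
  set CM := Real.exp (2*M) with hCMdef
  set G := (gam 1 : ℝ) - gam 0 with hGdef
  set R := CM * (r + CM * (2*r + G) + G) with hRdef
  have hCM0 : (0:ℝ) < CM := Real.exp_pos _
  have hG0 : (0:ℝ) ≤ G := by
    have := gam.mono (zero_le_one (α := ℝ)); rw [hGdef]; linarith
  have hR0 : (0:ℝ) ≤ R := by positivity
  set S := {f : C(Set.Icc (0:ℝ) 1, ℝ × ℝ) | ∃ Z : ℝ → ℝ × ℝ,
      IsSolution lam gam (Set.Icc 0 1) Z ∧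
      Z 0 ∈ insert (0 : ℝ × ℝ) (PsiInv '' Kset) ∧
      ∀ u : Set.Icc (0:ℝ) 1, f u = Z u} with hSdef
  -- facts about members of S
  have hfacts : ∀ f ∈ S, ∃ Z : ℝ → ℝ × ℝ, ∃ K : StieltjesFunction ℝ,
      IsSolutionPair lam gam K (Set.Icc 0 1) Z ∧ ContinuousOn Z (Set.Icc 0 1) ∧
      (∀ u : Set.Icc (0:ℝ) 1, f u = Z u) ∧ ∀ v ∈ Set.Icc (0:ℝ) 1, ‖Z v‖ ≤ R := by
    intro f hf
    obtain ⟨Z, ⟨K, hsol⟩, hZ0, hfZ⟩ := hf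
    have hZc : ContinuousOn Z (Set.Icc 0 1) := by
      rw [continuousOn_iff_continuous_restrict]
      have : (Set.Icc (0:ℝ) 1).restrict Z = ⇑f := funext fun u => (hfZ u).symm
      change Continuous ((Set.Icc (0:ℝ) 1).restrict Z); rw [this]; exact f.continuous
    refine ⟨Z, K, hsol, hZc, hfZ, ?_⟩
    have h1 := hr𝒵 _ hZ0
    have h2 := hcone _ hZ0
    exact refl_sup_bound hlam M hM hsol hZc h1 h2.1 h2.2
  -- move to bounded continuous functions
  set E := (ContinuousMap.isometryEquivBoundedOfCompact (Set.Icc (0:ℝ) 1) (ℝ × ℝ)).toHomeomorph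
    with hEdef
  have hEapp : ∀ (f : C(Set.Icc (0:ℝ) 1, ℝ × ℝ)) (x : Set.Icc (0:ℝ) 1), (E f) x = f x :=
    fun f x => rfl
  have key : IsCompact (closure (⇑E '' S)) := by
    refine BoundedContinuousFunction.arzela_ascoli (Metric.closedBall (0:ℝ×ℝ) R)
      (isCompact_closedBall _ _) (⇑E '' S) ?_ ?_
    · rintro g x ⟨f, hfS, rfl⟩
      obtain ⟨Z, K, hsol, hZc, hfZ, hRb⟩ := hfacts f hfS
      rw [Metric.mem_closedBall, dist_zero_right, hEapp, hfZ]
      exact hRb x x.2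
    · -- equicontinuity
      intro x₀
      rw [Metric.equicontinuousAt_iff]
      intro ε hε
      -- choose the increment scale e
      set e := min (ε/(20*CM)) (Real.log (1 + ε/(8*R+8))) with hedef
      have he0 : 0 < e := by
        apply lt_min
        · positivity
        · apply Real.log_pos
          have : 0 < ε/(8*R+8) := by positivity
          linarith
      have hbound : 4*R*(Real.exp e - 1) + 5*CM*e ≤ 3*ε/4 := by
        have h1 : Real.exp e ≤ 1 + ε/(8*R+8) := by
          have := min_le_right (ε/(20*CM)) (Real.log (1 + ε/(8*R+8)))
          calc Real.exp e ≤ Real.exp (Real.log (1 + ε/(8*R+8))) := Real.exp_le_exp.2 this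
            _ = 1 + ε/(8*R+8) := Real.exp_log (by positivity)
        have h2 : 4*R*(Real.exp e - 1) ≤ 4*R*(ε/(8*R+8)) :=
          mul_le_mul_of_nonneg_left (by linarith) (by positivity)
        have h3 : 4*R*(ε/(8*R+8)) ≤ ε/2 := by
          have h8 : (0:ℝ) < 8*R+8 := by positivity
          have heq : 4*R*(ε/(8*R+8)) = (4*R*ε)/(8*R+8) := by ring
          rw [heq, div_le_div_iff₀ h8 (by norm_num : (0:ℝ) < 2)]
          nlinarith
        have h4 : 5*CM*e ≤ ε/4 := by
          have := min_le_left (ε/(20*CM)) (Real.log (1 + ε/(8*R+8)))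
          have h5 : e ≤ ε/(20*CM) := this
          calc 5*CM*e ≤ 5*CM*(ε/(20*CM)) := by
                apply mul_le_mul_of_nonneg_left h5 (by positivity)
            _ = ε/4 := by field_simp; ring
        linarith
      -- choose delta from uniform continuity
      have hulam := (isCompact_Icc (a := (0:ℝ)) (b := 1)).uniformContinuousOn_of_continuous hlam
      have hugam := (isCompact_Icc (a := (0:ℝ)) (b := 1)).uniformContinuousOn_of_continuous
        (hgam.continuousOn : ContinuousOn gam (Set.Icc 0 1))
      rw [Metric.uniformContinuousOn_iff] at hulam hugam
      obtain ⟨δ₁, hδ₁, hδ₁'⟩ := hulam e he0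
      obtain ⟨δ₂, hδ₂, hδ₂'⟩ := hugam e he0
      refine ⟨min δ₁ δ₂, lt_min hδ₁ hδ₂, fun x hx i => ?_⟩
      obtain ⟨g, hg⟩ := i
      obtain ⟨f, hfS, rfl⟩ := hg
      show dist ((E f) x₀) ((E f) x) < ε
      obtain ⟨Z, K, hsol, hZc, hfZ, hRb⟩ := hfacts f hfS
      -- order the two points
      set s' := min (x₀ : ℝ) (x : ℝ) with hs'def
      set t' := max (x₀ : ℝ) (x : ℝ) with ht'def
      have hs'I : s' ∈ Set.Icc (0:ℝ) 1 := by
        rcases min_cases (x₀ : ℝ) (x : ℝ) with ⟨h, _⟩ | ⟨h, _⟩ <;> rw [hs'def, h]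
        exacts [x₀.2, x.2]
      have ht'I : t' ∈ Set.Icc (0:ℝ) 1 := by
        rcases max_cases (x₀ : ℝ) (x : ℝ) with ⟨h, _⟩ | ⟨h, _⟩ <;> rw [ht'def, h]
        exacts [x₀.2, x.2]
      have hst' : s' ≤ t' := min_le_max
      have hts' : t' - s' < min δ₁ δ₂ := by
        rw [Subtype.dist_eq, Real.dist_eq] at hx
        have habs : t' - s' ≤ |(x₀:ℝ) - (x:ℝ)| := by
          rw [ht'def, hs'def]
          rcases le_total (x₀ : ℝ) (x : ℝ) with h | h
          · rw [max_eq_right h, min_eq_left h, abs_sub_comm,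
              abs_of_nonneg (by linarith : (0:ℝ) ≤ (x:ℝ) - (x₀:ℝ))]
          · rw [max_eq_left h, min_eq_right h,
              abs_of_nonneg (by linarith : (0:ℝ) ≤ (x₀:ℝ) - (x:ℝ))]
        calc t' - s' ≤ |(x₀:ℝ) - (x:ℝ)| := habs
          _ < min δ₁ δ₂ := by rwa [abs_sub_comm]
      have hosc : ∀ a ∈ Set.Icc s' t', ∀ b ∈ Set.Icc s' t', |lam a - lam b| ≤ e := by
        intro a ha b hb
        have haI : a ∈ Set.Icc (0:ℝ) 1 := ⟨hs'I.1.trans ha.1, ha.2.trans ht'I.2⟩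
        have hbI : b ∈ Set.Icc (0:ℝ) 1 := ⟨hs'I.1.trans hb.1, hb.2.trans ht'I.2⟩
        have hd : dist a b < δ₁ := by
          rw [Real.dist_eq]
          have : |a - b| ≤ t' - s' := by
            rw [abs_sub_le_iff]; constructor <;> linarith [ha.1, ha.2, hb.1, hb.2]
          calc |a - b| ≤ t' - s' := this
            _ < min δ₁ δ₂ := hts'
            _ ≤ δ₁ := min_le_left _ _
        have := hδ₁' a haI b hbI hd
        rw [Real.dist_eq] at this
        exact this.le
      have hgs : (gam t' : ℝ) - gam s' ≤ e := by
        have hd : dist t' s' < δ₂ := by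
          rw [Real.dist_eq, abs_of_nonneg (by linarith)]
          exact hts'.trans_le (min_le_right _ _)
        have := hδ₂' t' ht'I s' hs'I hd
        rw [Real.dist_eq] at this
        exact (le_abs_self _).trans this.le
      have hinc := refl_increment hlam M hM hgam hsol hZc R hRb hs'I ht'I hst' hosc hgs
      -- conclude
      have hdist : dist ((E f) x₀) ((E f) x) = ‖Z t' - Z s'‖ := by
        rw [hEapp, hEapp, hfZ, hfZ, dist_eq_norm]
        rcases le_total (x₀ : ℝ) (x : ℝ) with h | h
        · rw [ht'def, hs'def, max_eq_right h, min_eq_left h, norm_sub_rev]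
        · rw [ht'def, hs'def, max_eq_left h, min_eq_right h]
      rw [hdist]
      calc ‖Z t' - Z s'‖ ≤ 4*R*(Real.exp e - 1) + 5*CM*e := hinc
        _ ≤ 3*ε/4 := hbound
        _ < ε := by linarith
  -- transfer compactness back
  have hpre : closure S = ⇑E ⁻¹' closure (⇑E '' S) := by
    rw [E.preimage_closure, Homeomorph.preimage_image]
  rw [hpre]
  exact E.isCompact_preimage.2 key
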